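/- Let ι be a finite type, a < b reals, and Δ : ℝ → Matrix ι ι ℝ a matrix-valued function with Δ(x)ᵀ = Δ(x) for all x ∈ [a, b]. Fix Λ ∈ [a, b], suppose Δ has derivative D ∈ Matrix ι ι ℝ at Λ, and suppose Δ(x) is invertible for all x in a neighbourhood of Λ as well as at b. Define F(x) := (Δ(x))⁻¹ * Δ(b) and E(x) := Δ(b) * ((Δ(x))⁻¹ − (Δ(b))⁻¹) * Δ(b). Then E(b) = 0 and E has derivative −(F(Λ))ᵀ * D * F(Λ) at Λ. -/

import Mathlib

open Matrix

attribute [local instance] Matrix.normedAddCommGroup Matrix.normedSpace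

private lemma diffAt_det {ι : Type*} [Fintype ι] [DecidableEq ι]
    {M : ℝ → Matrix ι ι ℝ} {x : ℝ}
    (h : ∀ i j, DifferentiableAt ℝ (fun t => M t i j) x) :
    DifferentiableAt ℝ (fun t => (M t).det) x := by
  simp only [Matrix.det_apply']
  exact DifferentiableAt.fun_sum fun σ _ =>
    ((DifferentiableAt.fun_finsetProd (fun i _ => h (σ i) i))).const_mul _

/-- Closed-form solution of the flow equation (polE): for symmetric `Δ`, with
`F(x) = (Δ(x))⁻¹ * Δ(b)` and `E(x) = Δ(b) * ((Δ(x))⁻¹ − (Δ(b))⁻¹) * Δ(b)`, one has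
`E(b) = 0` and `E'(Λ) = −(F(Λ))ᵀ * D * F(Λ)` whenever `Δ` has derivative `D` at
`Λ ∈ [a,b]` and `Δ(x)` is invertible near `Λ` and at `b`. -/
theorem flow_equation_E {ι : Type*} [Fintype ι] [DecidableEq ι]
    (a b : ℝ) (hab : a < b) (Δ : ℝ → Matrix ι ι ℝ)
    (hsym : ∀ x ∈ Set.Icc a b, (Δ x)ᵀ = Δ x)
    (Λ : ℝ) (hΛ : Λ ∈ Set.Icc a b)
    (D : Matrix ι ι ℝ) (hD : HasDerivAt Δ D Λ)
    (hinv : ∀ᶠ x in nhds Λ, IsUnit (Δ x).det)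
    (hinvb : IsUnit (Δ b).det) :
    (fun x => Δ b * ((Δ x)⁻¹ - (Δ b)⁻¹) * Δ b) b = 0 ∧
    HasDerivAt (fun x => Δ b * ((Δ x)⁻¹ - (Δ b)⁻¹) * Δ b)
      (-(((Δ Λ)⁻¹ * Δ b)ᵀ * D * ((Δ Λ)⁻¹ * Δ b))) Λ := by
  have hb : b ∈ Set.Icc a b := ⟨hab.le, le_refl b⟩
  have hsb := hsym b hb
  have hsΛ := hsym Λ hΛ
  have hunitΛ : IsUnit (Δ Λ).det := hinv.self_of_nhds
  have hdetΛ : (Δ Λ).det ≠ 0 := hunitΛ.ne_zero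
  -- entry derivatives
  have hent : ∀ i j, HasDerivAt (fun x => Δ x i j) (D i j) Λ := fun i j =>
    hasDerivAt_pi.1 (hasDerivAt_pi.1 hD i) j
  have hdent : ∀ i j, DifferentiableAt ℝ (fun x => Δ x i j) Λ := fun i j =>
    (hent i j).differentiableAt
  -- inverse differentiable
  have hdiffinv : DifferentiableAt ℝ (fun x => (Δ x)⁻¹) Λ := by
    refine differentiableAt_pi.2 fun i => ?_
    refine differentiableAt_pi.2 fun j => ?_
    have heq : (fun x => (Δ x)⁻¹ i j) =
        fun x => ((Δ x).det)⁻¹ * (Δ x).adjugate i j := by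
      funext x
      rw [Matrix.inv_def, Ring.inverse_eq_inv']
      simp [Matrix.smul_apply, smul_eq_mul]
    rw [heq]
    refine ((diffAt_det hdent).inv hdetΛ).mul ?_
    have : (fun x => (Δ x).adjugate i j) =
        fun x => ((Δ x).updateRow j (Pi.single i 1)).det := by
      funext x; rw [Matrix.adjugate_apply]
    rw [this]
    refine diffAt_det fun k l => ?_
    by_cases hk : k = j
    · simp [Matrix.updateRow_apply, hk]
    · simpa [Matrix.updateRow_apply, hk] using hdent k l
  set D' : Matrix ι ι ℝ := deriv (fun x => (Δ x)⁻¹) Λ with hD'def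
  have hD' : HasDerivAt (fun x => (Δ x)⁻¹) D' Λ := hdiffinv.hasDerivAt
  have hinvent : ∀ i j, HasDerivAt (fun x => (Δ x)⁻¹ i j) (D' i j) Λ := fun i j =>
    hasDerivAt_pi.1 (hasDerivAt_pi.1 hD' i) j
  -- product rule entrywise
  have hzero : ∀ i j, (∑ k, (D i k * (Δ Λ)⁻¹ k j + Δ Λ i k * D' k j)) = 0 := by
    intro i j
    have hprod : HasDerivAt (fun x => ∑ k, Δ x i k * (Δ x)⁻¹ k j)
        (∑ k, (D i k * (Δ Λ)⁻¹ k j + Δ Λ i k * D' k j)) Λ :=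
      HasDerivAt.fun_sum fun k _ => (hent i k).mul (hinvent k j)
    have hconst : HasDerivAt (fun x => ∑ k, Δ x i k * (Δ x)⁻¹ k j) 0 Λ := by
      refine (hasDerivAt_const Λ ((1 : Matrix ι ι ℝ) i j)).congr_of_eventuallyEq ?_
      filter_upwards [hinv] with x hx
      rw [← Matrix.mul_apply, Matrix.mul_nonsing_inv _ hx]
    exact hprod.unique hconst
  have hmat : D * (Δ Λ)⁻¹ + Δ Λ * D' = 0 := by
    ext i j
    simpa [Matrix.add_apply, Matrix.mul_apply, ← Finset.sum_add_distrib] using hzero i j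
  have hD'eq : D' = -((Δ Λ)⁻¹ * D * (Δ Λ)⁻¹) := by
    have h1 : Δ Λ * D' = -(D * (Δ Λ)⁻¹) := by
      have := hmat
      linear_combination (norm := noncomm_ring) this
    calc D' = ((Δ Λ)⁻¹ * Δ Λ) * D' := by rw [Matrix.nonsing_inv_mul _ hunitΛ, one_mul]
      _ = (Δ Λ)⁻¹ * (Δ Λ * D') := by rw [Matrix.mul_assoc]
      _ = -((Δ Λ)⁻¹ * D * (Δ Λ)⁻¹) := by rw [h1]; noncomm_ring
  constructor
  · simp
  · -- linear map M ↦ Δ b * M * Δ b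
    have hf : HasDerivAt (fun x => (Δ x)⁻¹ - (Δ b)⁻¹) D' Λ := hD'.sub_const _
    let L : Matrix ι ι ℝ →ₗ[ℝ] Matrix ι ι ℝ :=
      { toFun := fun M => Δ b * M * Δ b
        map_add' := fun M N => by noncomm_ring
        map_smul' := fun c M => by simp [Matrix.mul_smul, Matrix.smul_mul] }
    have hLd : HasDerivAt (fun x => Δ b * ((Δ x)⁻¹ - (Δ b)⁻¹) * Δ b)
        (Δ b * D' * Δ b) Λ := by
      have := (L.toContinuousLinearMap.hasFDerivAt (x := (Δ Λ)⁻¹ - (Δ b)⁻¹)).comp_hasDerivAt Λ hf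
      exact this
    have hval : Δ b * D' * Δ b = -(((Δ Λ)⁻¹ * Δ b)ᵀ * D * ((Δ Λ)⁻¹ * Δ b)) := by
      rw [hD'eq, Matrix.transpose_mul, Matrix.transpose_nonsing_inv, hsΛ, hsb]
      noncomm_ring
    rwa [hval] at hLd
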